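/- Let A₁, A₂, A₃ be dichotomic observables on ℂ^{d₁}, B₁, B₂, B₃ be dichotomic observables on ℂ^{d₂}, and ρ a state on ℂ^{d₁}⊗ℂ^{d₂}. Then the quantum Bell value 𝓘 = Re Tr[ℐ ρ] satisfies 𝓘 ≤ √(3·(12 − Re Tr[((A₁+A₂+A₃)⊗1)² ρ])), and in particular 𝓘 ≤ 6. -/

import Mathlib

open Kronecker ComplexOrder

namespace QB6

open Matrix

lemma kron_conjT {m n : Type*} [Fintype m] [Fintype n] (A : Matrix m m ℂ) (B : Matrix n n ℂ) :
    (A ⊗ₖ B)ᴴ = Aᴴ ⊗ₖ Bᴴ := by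
  ext ⟨i, j⟩ ⟨k, l⟩
  simp [Matrix.conjTranspose_apply, Matrix.kroneckerMap_apply, mul_comm]

lemma sub_kron {m n : Type*} (A B : Matrix m m ℂ) (C : Matrix n n ℂ) :
    (A - B) ⊗ₖ C = A ⊗ₖ C - B ⊗ₖ C := by
  ext ⟨i, j⟩ ⟨k, l⟩
  simp [Matrix.kroneckerMap_apply, sub_mul]

lemma trace_nonneg_of_psd {n : Type*} [Fintype n] {M : Matrix n n ℂ}
    (hM : M.PosSemidef) : 0 ≤ M.trace.re := by
  classical
  have h : ∀ i, 0 ≤ (M i i).re := by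
    intro i
    have h2 := hM.dotProduct_mulVec_nonneg (Pi.single i 1)
    have h3 : star (Pi.single i 1) ⬝ᵥ M *ᵥ (Pi.single i 1) = M i i := by
      simp [Matrix.mulVec_single, dotProduct, Pi.single_apply]
    rw [h3] at h2
    exact (Complex.le_def.mp h2).1
  simpa [Matrix.trace, Matrix.diag] using Finset.sum_nonneg (fun i _ => h i)

open scoped MatrixOrder in
lemma trace_psd_mul_nonneg {n : Type*} [Fintype n] [DecidableEq n]
    {P Q : Matrix n n ℂ} (hP : P.PosSemidef) (hQ : Q.PosSemidef) :
    0 ≤ ((P * Q).trace).re := by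
  have h1 : (P * Q).trace = (CFC.sqrt Q * P * CFC.sqrt Q).trace := by
    rw [Matrix.trace_mul_cycle, CFC.sqrt_mul_sqrt_self Q hQ.nonneg, Matrix.trace_mul_comm]
  have h2 : (CFC.sqrt Q * P * CFC.sqrt Q).PosSemidef := by
    have := hP.conjTranspose_mul_mul_same (CFC.sqrt Q)
    rwa [(CFC.sqrt_nonneg Q).posSemidef.isHermitian.eq] at this
  rw [h1]; exact trace_nonneg_of_psd h2

lemma sq_psd {n : Type*} [Fintype n] {M : Matrix n n ℂ} (hM : M.IsHermitian) :
    (M * M).PosSemidef := by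
  have := Matrix.posSemidef_conjTranspose_mul_self M
  rwa [hM.eq] at this

lemma expand_sq {N : Type*} [Fintype N] [DecidableEq N] (X Y : Matrix N N ℂ) (c d : ℂ)
    (hcomm : X * Y = Y * X) (hY : Y * Y = 1) (hcd : c * d = 1) :
    (c • X - d • Y) * (c • X - d • Y)
      = (c * c) • (X * X) + (d * d) • (1 : Matrix N N ℂ) - (2 : ℂ) • (X * Y) := by
  simp only [sub_mul, mul_sub, Matrix.smul_mul, Matrix.mul_smul, smul_smul]
  rw [hY, ← hcomm, mul_comm d c, hcd]
  rw [show (2:ℂ) • (X*Y) = (1:ℂ) • (X*Y) + (1:ℂ) • (X*Y) from by rw [← add_smul]; norm_num]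
  abel

end QB6

open QB6 Matrix

set_option maxHeartbeats 1000000 in
theorem quantum_bound_six {d₁ d₂ : ℕ}
    (A₁ A₂ A₃ : Matrix (Fin d₁) (Fin d₁) ℂ)
    (B₁ B₂ B₃ : Matrix (Fin d₂) (Fin d₂) ℂ)
    (hA₁ : A₁.IsHermitian) (hA₂ : A₂.IsHermitian) (hA₃ : A₃.IsHermitian)
    (hA₁sq : A₁ * A₁ = 1) (hA₂sq : A₂ * A₂ = 1) (hA₃sq : A₃ * A₃ = 1)
    (hB₁ : B₁.IsHermitian) (hB₂ : B₂.IsHermitian) (hB₃ : B₃.IsHermitian)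
    (hB₁sq : B₁ * B₁ = 1) (hB₂sq : B₂ * B₂ = 1) (hB₃sq : B₃ * B₃ = 1)
    (ρ : Matrix (Fin d₁ × Fin d₂) (Fin d₁ × Fin d₂) ℂ)
    (hρ : ρ.PosSemidef) (hρtr : ρ.trace = 1) :
    (((((A₁ + A₂ - A₃) ⊗ₖ B₁ + (A₁ - A₂ + A₃) ⊗ₖ B₂ + (-A₁ + A₂ + A₃) ⊗ₖ B₃) * ρ).trace).re
        ≤ Real.sqrt (3 * (12 -
          (((((A₁ + A₂ + A₃) ⊗ₖ (1 : Matrix (Fin d₂) (Fin d₂) ℂ)) *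
            ((A₁ + A₂ + A₃) ⊗ₖ (1 : Matrix (Fin d₂) (Fin d₂) ℂ)) * ρ).trace).re)))) ∧
    (((((A₁ + A₂ - A₃) ⊗ₖ B₁ + (A₁ - A₂ + A₃) ⊗ₖ B₂ + (-A₁ + A₂ + A₃) ⊗ₖ B₃) * ρ).trace).re
        ≤ 6) := by
  classical
  set C₁ := A₁ + A₂ - A₃ with hC₁def
  set C₂ := A₁ - A₂ + A₃ with hC₂def
  set C₃ := -A₁ + A₂ + A₃ with hC₃def
  set S := A₁ + A₂ + A₃ with hSdef
  set T : Matrix (Fin d₁ × Fin d₂) (Fin d₁ × Fin d₂) ℂ :=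
    S ⊗ₖ (1 : Matrix (Fin d₂) (Fin d₂) ℂ) with hTdef
  set ℐ : Matrix (Fin d₁ × Fin d₂) (Fin d₁ × Fin d₂) ℂ :=
    C₁ ⊗ₖ B₁ + C₂ ⊗ₖ B₂ + C₃ ⊗ₖ B₃ with hIdef
  set x : ℝ := ((T * T * ρ).trace).re with hxdef
  set I : ℝ := ((ℐ * ρ).trace).re with hIval
  -- Hermiticity facts
  have hC₁h : C₁.IsHermitian := (hA₁.add hA₂).sub hA₃
  have hC₂h : C₂.IsHermitian := (hA₁.sub hA₂).add hA₃
  have hC₃h : C₃.IsHermitian := (hA₁.neg.add hA₂).add hA₃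
  have hSh : S.IsHermitian := (hA₁.add hA₂).add hA₃
  have hTh : T.IsHermitian := by
    show Tᴴ = T
    rw [hTdef, kron_conjT, hSh.eq, Matrix.conjTranspose_one]
  -- Positivity of x
  have hx0 : 0 ≤ x := trace_psd_mul_nonneg (sq_psd hTh) hρ
  -- X and Y operators
  set X₁ : Matrix (Fin d₁ × Fin d₂) (Fin d₁ × Fin d₂) ℂ := C₁ ⊗ₖ 1 with hX₁def
  set X₂ : Matrix (Fin d₁ × Fin d₂) (Fin d₁ × Fin d₂) ℂ := C₂ ⊗ₖ 1 with hX₂def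
  set X₃ : Matrix (Fin d₁ × Fin d₂) (Fin d₁ × Fin d₂) ℂ := C₃ ⊗ₖ 1 with hX₃def
  set Y₁ : Matrix (Fin d₁ × Fin d₂) (Fin d₁ × Fin d₂) ℂ := (1 : Matrix (Fin d₁) (Fin d₁) ℂ) ⊗ₖ B₁ with hY₁def
  set Y₂ : Matrix (Fin d₁ × Fin d₂) (Fin d₁ × Fin d₂) ℂ := (1 : Matrix (Fin d₁) (Fin d₁) ℂ) ⊗ₖ B₂ with hY₂def
  set Y₃ : Matrix (Fin d₁ × Fin d₂) (Fin d₁ × Fin d₂) ℂ := (1 : Matrix (Fin d₁) (Fin d₁) ℂ) ⊗ₖ B₃ with hY₃def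
  have hX₁h : X₁.IsHermitian := by
    show X₁ᴴ = X₁; rw [hX₁def, kron_conjT, hC₁h.eq, Matrix.conjTranspose_one]
  have hX₂h : X₂.IsHermitian := by
    show X₂ᴴ = X₂; rw [hX₂def, kron_conjT, hC₂h.eq, Matrix.conjTranspose_one]
  have hX₃h : X₃.IsHermitian := by
    show X₃ᴴ = X₃; rw [hX₃def, kron_conjT, hC₃h.eq, Matrix.conjTranspose_one]
  have hY₁h : Y₁.IsHermitian := by
    show Y₁ᴴ = Y₁; rw [hY₁def, kron_conjT, hB₁.eq, Matrix.conjTranspose_one]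
  have hY₂h : Y₂.IsHermitian := by
    show Y₂ᴴ = Y₂; rw [hY₂def, kron_conjT, hB₂.eq, Matrix.conjTranspose_one]
  have hY₃h : Y₃.IsHermitian := by
    show Y₃ᴴ = Y₃; rw [hY₃def, kron_conjT, hB₃.eq, Matrix.conjTranspose_one]
  have hXY₁ : X₁ * Y₁ = C₁ ⊗ₖ B₁ := by
    rw [hX₁def, hY₁def, ← Matrix.mul_kronecker_mul, Matrix.mul_one, Matrix.one_mul]
  have hXY₂ : X₂ * Y₂ = C₂ ⊗ₖ B₂ := by
    rw [hX₂def, hY₂def, ← Matrix.mul_kronecker_mul, Matrix.mul_one, Matrix.one_mul]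
  have hXY₃ : X₃ * Y₃ = C₃ ⊗ₖ B₃ := by
    rw [hX₃def, hY₃def, ← Matrix.mul_kronecker_mul, Matrix.mul_one, Matrix.one_mul]
  have hYX₁ : Y₁ * X₁ = C₁ ⊗ₖ B₁ := by
    rw [hX₁def, hY₁def, ← Matrix.mul_kronecker_mul, Matrix.mul_one, Matrix.one_mul]
  have hYX₂ : Y₂ * X₂ = C₂ ⊗ₖ B₂ := by
    rw [hX₂def, hY₂def, ← Matrix.mul_kronecker_mul, Matrix.mul_one, Matrix.one_mul]
  have hYX₃ : Y₃ * X₃ = C₃ ⊗ₖ B₃ := by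
    rw [hX₃def, hY₃def, ← Matrix.mul_kronecker_mul, Matrix.mul_one, Matrix.one_mul]
  have hYY₁ : Y₁ * Y₁ = 1 := by
    rw [hY₁def, ← Matrix.mul_kronecker_mul, Matrix.one_mul, hB₁sq, Matrix.one_kronecker_one]
  have hYY₂ : Y₂ * Y₂ = 1 := by
    rw [hY₂def, ← Matrix.mul_kronecker_mul, Matrix.one_mul, hB₂sq, Matrix.one_kronecker_one]
  have hYY₃ : Y₃ * Y₃ = 1 := by
    rw [hY₃def, ← Matrix.mul_kronecker_mul, Matrix.one_mul, hB₃sq, Matrix.one_kronecker_one]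
  -- squares of X sum up to 12 - T²
  have hkeyC : C₁ * C₁ + C₂ * C₂ + C₃ * C₃ + S * S
      = (12 : ℂ) • (1 : Matrix (Fin d₁) (Fin d₁) ℂ) := by
    rw [hC₁def, hC₂def, hC₃def, hSdef]
    simp only [add_mul, mul_add, sub_mul, mul_sub, neg_mul, mul_neg,
      hA₁sq, hA₂sq, hA₃sq]
    rw [show ((12:ℂ) • (1 : Matrix (Fin d₁) (Fin d₁) ℂ)) = ((12:ℕ):ℂ) • 1 from by norm_num,
      Nat.cast_smul_eq_nsmul]
    abel
  have hXsum : X₁ * X₁ + X₂ * X₂ + X₃ * X₃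
      = (12 : ℂ) • (1 : Matrix (Fin d₁ × Fin d₂) (Fin d₁ × Fin d₂) ℂ) - T * T := by
    rw [hX₁def, hX₂def, hX₃def, hTdef]
    rw [← Matrix.mul_kronecker_mul, ← Matrix.mul_kronecker_mul, ← Matrix.mul_kronecker_mul,
      ← Matrix.mul_kronecker_mul]
    simp only [Matrix.mul_one]
    rw [eq_sub_iff_add_eq, ← Matrix.add_kronecker, ← Matrix.add_kronecker, ← Matrix.add_kronecker,
      hkeyC, Matrix.smul_kronecker, Matrix.one_kronecker_one]
  -- the trace functional
  have htr12 : (((12 : ℂ) • (1 : Matrix (Fin d₁ × Fin d₂) (Fin d₁ × Fin d₂) ℂ) * ρ).trace).re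
      = 12 := by
    rw [Matrix.smul_mul, Matrix.one_mul, Matrix.trace_smul, hρtr]
    norm_num
  -- 12 - x ≥ 0
  have hy0 : 0 ≤ 12 - x := by
    have h1 : 0 ≤ (((X₁ * X₁ + X₂ * X₂ + X₃ * X₃) * ρ).trace).re := by
      rw [Matrix.add_mul, Matrix.add_mul, Matrix.trace_add, Matrix.trace_add]
      simp only [Complex.add_re]
      have := trace_psd_mul_nonneg (sq_psd hX₁h) hρ
      have := trace_psd_mul_nonneg (sq_psd hX₂h) hρ
      have := trace_psd_mul_nonneg (sq_psd hX₃h) hρ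
      linarith
    rw [hXsum, Matrix.sub_mul, Matrix.trace_sub, Complex.sub_re, htr12] at h1
    linarith
  -- the key inequality
  have hkey : ∀ a : ℝ, 0 < a → 2 * I ≤ a ^ 2 * (12 - x) + 3 * (a⁻¹) ^ 2 := by
    intro a ha
    set c : ℂ := ((a : ℝ) : ℂ) with hcdef
    set d : ℂ := ((a⁻¹ : ℝ) : ℂ) with hddef
    have hcd : c * d = 1 := by
      rw [hcdef, hddef, ← Complex.ofReal_mul, mul_inv_cancel₀ (ne_of_gt ha), Complex.ofReal_one]
    have hM₁ := expand_sq X₁ Y₁ c d (by rw [hXY₁, hYX₁]) hYY₁ hcd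
    have hM₂ := expand_sq X₂ Y₂ c d (by rw [hXY₂, hYX₂]) hYY₂ hcd
    have hM₃ := expand_sq X₃ Y₃ c d (by rw [hXY₃, hYX₃]) hYY₃ hcd
    -- each M is Hermitian
    have hcr : (starRingEnd ℂ) c = c := Complex.conj_ofReal a
    have hdr : (starRingEnd ℂ) d = d := Complex.conj_ofReal a⁻¹
    have hMh : ∀ (X Y : Matrix (Fin d₁ × Fin d₂) (Fin d₁ × Fin d₂) ℂ),
        X.IsHermitian → Y.IsHermitian → (c • X - d • Y).IsHermitian := by
      intro X Y hX hY
      show (c • X - d • Y)ᴴ = _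
      simp [Matrix.conjTranspose_sub, Matrix.conjTranspose_smul, hX.eq, hY.eq,
        hcdef, hddef, Complex.conj_ofReal]
    have hD : ((c • X₁ - d • Y₁) * (c • X₁ - d • Y₁) + (c • X₂ - d • Y₂) * (c • X₂ - d • Y₂)
        + (c • X₃ - d • Y₃) * (c • X₃ - d • Y₃)).PosSemidef :=
      ((sq_psd (hMh X₁ Y₁ hX₁h hY₁h)).add (sq_psd (hMh X₂ Y₂ hX₂h hY₂h))).add
        (sq_psd (hMh X₃ Y₃ hX₃h hY₃h))
    have h0 := trace_psd_mul_nonneg hD hρ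
    rw [hM₁, hM₂, hM₃] at h0
    -- rearrange the matrix expression
    have hrearr : ((c * c) • (X₁ * X₁) + (d * d) • (1 : Matrix (Fin d₁ × Fin d₂) (Fin d₁ × Fin d₂) ℂ)
          - (2 : ℂ) • (X₁ * Y₁))
        + ((c * c) • (X₂ * X₂) + (d * d) • 1 - (2 : ℂ) • (X₂ * Y₂))
        + ((c * c) • (X₃ * X₃) + (d * d) • 1 - (2 : ℂ) • (X₃ * Y₃))
        = (c * c) • (X₁ * X₁ + X₂ * X₂ + X₃ * X₃) + ((3 : ℂ) * (d * d)) • 1 - (2 : ℂ) • ℐ := by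
      rw [hXY₁, hXY₂, hXY₃, hIdef]
      rw [show ((3:ℂ) * (d * d)) • (1 : Matrix (Fin d₁ × Fin d₂) (Fin d₁ × Fin d₂) ℂ)
          = (d*d) • 1 + (d*d) • 1 + (d*d) • 1 from by rw [← add_smul, ← add_smul]; ring_nf]
      simp only [smul_add]
      abel
    rw [hrearr, hXsum] at h0
    -- expand the trace
    have htr : ((((c * c) • ((12 : ℂ) • (1 : Matrix (Fin d₁ × Fin d₂) (Fin d₁ × Fin d₂) ℂ) - T * T)
          + ((3 : ℂ) * (d * d)) • 1 - (2 : ℂ) • ℐ) * ρ).trace)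
        = (c * c) * (12 - (T * T * ρ).trace) + 3 * (d * d) - 2 * ((ℐ * ρ).trace) := by
      simp only [Matrix.sub_mul, Matrix.add_mul, Matrix.smul_mul, Matrix.one_mul,
        Matrix.trace_sub, Matrix.trace_add, Matrix.trace_smul, hρtr, smul_eq_mul]
      ring
    rw [htr] at h0
    have hcc : c * c = ((a ^ 2 : ℝ) : ℂ) := by rw [hcdef]; push_cast; ring
    have hdd : (3 : ℂ) * (d * d) = (((3 * (a⁻¹) ^ 2 : ℝ)) : ℂ) := by rw [hddef]; push_cast; ring
    rw [hcc, hdd] at h0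
    simp only [Complex.add_re, Complex.sub_re, Complex.mul_re, Complex.ofReal_re,
      Complex.ofReal_im, Complex.re_ofNat, Complex.im_ofNat, zero_mul, sub_zero,
      Complex.sub_im, Complex.mul_im, Complex.add_im] at h0
    rw [← hxdef, ← hIval] at h0
    linarith
  -- conclusion
  have hmain : I ≤ Real.sqrt (3 * (12 - x)) := by
    rcases eq_or_lt_of_le hy0 with h0 | hpos
    · -- 12 - x = 0
      have hI0 : I ≤ 0 := by
        by_contra h
        push_neg at h
        have ha : (0:ℝ) < Real.sqrt (3 / I) := Real.sqrt_pos.mpr (by positivity)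
        have := hkey _ ha
        rw [Real.sq_sqrt (by positivity : (0:ℝ) ≤ 3 / I), ← h0] at this
        rw [inv_pow, Real.sq_sqrt (by positivity : (0:ℝ) ≤ 3 / I)] at this
        have h3 : (3 / I)⁻¹ = I / 3 := by field_simp
        rw [h3] at this
        nlinarith
      calc I ≤ 0 := hI0
        _ ≤ Real.sqrt (3 * (12 - x)) := Real.sqrt_nonneg _
    · -- 0 < 12 - x
      set y : ℝ := 12 - x with hy
      have hsy : (0:ℝ) < Real.sqrt y := Real.sqrt_pos.mpr hpos
      have hs3 : (0:ℝ) < Real.sqrt 3 := Real.sqrt_pos.mpr (by norm_num)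
      have ha : (0:ℝ) < Real.sqrt (Real.sqrt 3 / Real.sqrt y) :=
        Real.sqrt_pos.mpr (by positivity)
      have h := hkey _ ha
      rw [Real.sq_sqrt (by positivity : (0:ℝ) ≤ Real.sqrt 3 / Real.sqrt y)] at h
      rw [inv_pow, Real.sq_sqrt (by positivity : (0:ℝ) ≤ Real.sqrt 3 / Real.sqrt y)] at h
      have hinv : (Real.sqrt 3 / Real.sqrt y)⁻¹ = Real.sqrt y / Real.sqrt 3 := by
        rw [inv_div]
      rw [hinv] at h
      have hy1 : Real.sqrt 3 / Real.sqrt y * y = Real.sqrt 3 * Real.sqrt y := by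
        rw [div_mul_eq_mul_div, mul_div_assoc, Real.div_sqrt]
      have hy2 : 3 * (Real.sqrt y / Real.sqrt 3) = Real.sqrt 3 * Real.sqrt y := by
        rw [mul_div_assoc', mul_comm (3:ℝ), mul_div_assoc, Real.div_sqrt, mul_comm]
      rw [hy1, hy2, ← Real.sqrt_mul (by norm_num : (0:ℝ) ≤ 3)] at h
      linarith
  refine ⟨hmain, ?_⟩
  have h36 : Real.sqrt (3 * (12 - x)) ≤ 6 := by
    have : 3 * (12 - x) ≤ 36 := by nlinarith
    calc Real.sqrt (3 * (12 - x)) ≤ Real.sqrt 36 := Real.sqrt_le_sqrt this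
      _ = 6 := by rw [show (36:ℝ) = 6^2 by norm_num, Real.sqrt_sq (by norm_num)]
  exact le_trans hmain h36
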